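/- (Optimal discrimination requires high inconclusive rate.) For every γ ∈ (1/√2, 1], no γ-admissible triple (Π₀,Π₁,Π_∅) attains the optimal normalized guessing probability, i.e., every γ-admissible triple satisfies V/γ² ≤ (1/2)·(1 + 1/(2√2·γ²)) < 1/2 + 1/(2√2); the maximal value 1/2 + 1/(2√2) is attainable only when γ ≤ 1/√2. -/

import Mathlib

open Matrix Complex Kronecker BigOperators ComplexOrder

noncomputable section

abbrev Mat2 := Matrix (Fin 2) (Fin 2) ℂ
abbrev Mat4 := Matrix (Fin 2 × Fin 2) (Fin 2 × Fin 2) ℂ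

/-- Pauli X matrix -/
def PX : Mat2 := !![0, 1; 1, 0]

/-- Pauli Y matrix -/
def PY : Mat2 := !![0, -Complex.I; Complex.I, 0]

/-- sign (−1)^b for a bit b -/
def bsign (b : Bool) : ℂ := if b then -1 else 1

/-- boolean function f(x̄,ȳ) = (x₁·y₁) XOR x₂ XOR y₂ -/
def fxy (x y : Bool × Bool) : Bool := (((x.1 && y.1)).xor x.2).xor y.2

/-- qubit input states ω_{x̄}: ω_{(0,x₂)} = (I+(−1)^{x₂}X)/2, ω_{(1,x₂)} = (I+(−1)^{x₂}Y)/2 -/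
def omg (x : Bool × Bool) : Mat2 :=
  (1/2 : ℂ) • ((1 : Mat2) + bsign x.2 • (if x.1 then PY else PX))

/-- qubit input states τ_{ȳ} = (I+(−1)^{y₂}(X+(−1)^{y₁}Y)/√2)/2 -/
def tau (y : Bool × Bool) : Mat2 :=
  (1/2 : ℂ) • ((1 : Mat2) + (bsign y.2 / (Real.sqrt 2 : ℂ)) • (PX + bsign y.1 • PY))

/-- averaged input states ρ₀ (for c = false) and ρ₁ (for c = true) -/
def rho (c : Bool) : Mat4 :=
  (1/8 : ℂ) • ∑ x : Bool × Bool, ∑ y : Bool × Bool,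
    (if fxy x y = c then omg x ⊗ₖ tau y else 0)

/-- standard basis vectors of ℂ⁴ ≅ ℂ² ⊗ ℂ² -/
def ket (i j : Fin 2) : (Fin 2 × Fin 2) → ℂ := fun p => if p = (i, j) then 1 else 0

def PhiP : (Fin 2 × Fin 2) → ℂ := fun p => (1 / (Real.sqrt 2 : ℂ)) * (ket 0 0 p + ket 1 1 p)
def PhiM : (Fin 2 × Fin 2) → ℂ := fun p => (1 / (Real.sqrt 2 : ℂ)) * (ket 0 0 p - ket 1 1 p)
def PsiP : (Fin 2 × Fin 2) → ℂ := fun p => (1 / (Real.sqrt 2 : ℂ)) * (ket 0 1 p + ket 1 0 p)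
def PsiM : (Fin 2 × Fin 2) → ℂ := fun p => (1 / (Real.sqrt 2 : ℂ)) * (ket 0 1 p - ket 1 0 p)

/-- rank one projector |v⟩⟨v| -/
def proj (v : (Fin 2 × Fin 2) → ℂ) : Mat4 := Matrix.vecMulVec v (star v)

/-- a γ-admissible measurement triple -/
def Admissible (γ : ℝ) (P0 P1 Pe : Mat4) : Prop :=
  P0.PosSemidef ∧ P1.PosSemidef ∧ Pe.PosSemidef ∧
  P0 + P1 + Pe = 1 ∧
  ∀ x y : Bool × Bool, ((omg x ⊗ₖ tau y) * Pe).trace = 1 - (γ : ℂ)^2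

/-- guessing value V = (1/2)·Tr[ρ₀Π₀ + ρ₁Π₁] (a real number) -/
def Gval (P0 P1 : Mat4) : ℝ := (1/2) * ((rho false * P0 + rho true * P1).trace).re

/-! ### Auxiliary lemmas -/

lemma s2c : (Real.sqrt 2 : ℂ) * (Real.sqrt 2 : ℂ) = 2 := by
  norm_cast
  rw [Real.mul_self_sqrt (by norm_num)]

lemma s2ne : (Real.sqrt 2 : ℂ) ≠ 0 := by
  intro h
  simpa [h] using s2c

lemma hsumK : ∑ x : Bool × Bool, ∑ y : Bool × Bool, omg x ⊗ₖ tau y = (4:ℂ) • (1 : Mat4) := by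
  have h1 : (1:Mat2) ⊗ₖ (1:Mat2) = (1:Mat4) := Matrix.one_kronecker_one
  simp only [Fintype.sum_prod_type, Fintype.sum_bool, omg, tau, bsign, if_true, if_false,
    reduceIte, reduceCtorEq,
    Matrix.add_kronecker, Matrix.kronecker_add, Matrix.smul_kronecker, Matrix.kronecker_smul]
  rw [← h1]
  module

lemma hsumD : ∑ x : Bool × Bool, ∑ y : Bool × Bool, bsign (fxy x y) • (omg x ⊗ₖ tau y)
    = ((2:ℂ)/(Real.sqrt 2:ℂ)) • (PX ⊗ₖ PX + PY ⊗ₖ PY) := by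
  simp only [Fintype.sum_prod_type, Fintype.sum_bool, omg, tau, fxy, bsign,
    Bool.xor_true, Bool.xor_false, Bool.and_true, Bool.and_false, Bool.true_and, Bool.false_and,
    Bool.not_true, Bool.not_false, if_true, if_false, reduceIte, reduceCtorEq,
    Matrix.add_kronecker, Matrix.kronecker_add, Matrix.smul_kronecker, Matrix.kronecker_smul]
  module

lemma hPQ : proj PsiP - proj PsiM = (1/2:ℂ) • (PX ⊗ₖ PX + PY ⊗ₖ PY) := by
  have hs := s2ne
  ext ⟨i,j⟩ ⟨k,l⟩
  fin_cases i <;> fin_cases j <;> fin_cases k <;> fin_cases l <;>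
    simp [proj, PsiP, PsiM, ket, PX, PY, Matrix.vecMulVec_apply, Prod.ext_iff,
      Matrix.kroneckerMap_apply, Pi.star_apply, star_def] <;>
    field_simp <;>
    rw [sq, s2c] <;> ring

lemma trace_proj_mul (v : (Fin 2 × Fin 2) → ℂ) (M : Mat4) :
    (proj v * M).trace = star v ⬝ᵥ (M *ᵥ v) := by
  simp only [proj, Matrix.trace, Matrix.diag, Matrix.mul_apply, Matrix.vecMulVec_apply,
    dotProduct, Matrix.mulVec, Pi.star_apply]
  rw [Finset.sum_comm]
  refine Finset.sum_congr rfl fun j _ => ?_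
  rw [Finset.mul_sum]
  refine Finset.sum_congr rfl fun i _ => ?_
  ring

lemma unitP : star PsiP ⬝ᵥ PsiP = 1 := by
  simp [dotProduct, Fintype.sum_prod_type, Fin.sum_univ_two, PsiP, ket, Prod.ext_iff, star_def]
  field_simp
  rw [sq, s2c]
  norm_num

lemma unitM : star PsiM ⬝ᵥ PsiM = 1 := by
  simp [dotProduct, Fintype.sum_prod_type, Fin.sum_univ_two, PsiM, ket, Prod.ext_iff, star_def]
  field_simp
  rw [sq, s2c]
  norm_num

lemma rho_add : rho false + rho true = (1/2:ℂ) • (1 : Mat4) := by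
  have hif : ∀ x y : Bool × Bool,
      ((if fxy x y = false then omg x ⊗ₖ tau y else 0)
        + (if fxy x y = true then omg x ⊗ₖ tau y else 0)) = omg x ⊗ₖ tau y := by
    intro x y
    cases h : fxy x y <;> simp [h]
  rw [rho, rho, ← smul_add, ← Finset.sum_add_distrib]
  simp_rw [← Finset.sum_add_distrib, hif, hsumK]
  module

lemma rho_sub : rho false - rho true
    = (1/(2*(Real.sqrt 2:ℂ))) • (proj PsiP - proj PsiM) := by
  have hif : ∀ x y : Bool × Bool,
      ((if fxy x y = false then omg x ⊗ₖ tau y else 0)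
        - (if fxy x y = true then omg x ⊗ₖ tau y else 0))
        = bsign (fxy x y) • (omg x ⊗ₖ tau y) := by
    intro x y
    cases h : fxy x y <;> simp [h, bsign]
  have hXY : PX ⊗ₖ PX + PY ⊗ₖ PY = (2:ℂ) • (proj PsiP - proj PsiM) := by
    rw [hPQ]; module
  rw [rho, rho, ← smul_sub, ← Finset.sum_sub_distrib]
  simp_rw [← Finset.sum_sub_distrib, hif, hsumD, hXY]
  module

/-- for γ ∈ (1/√2, 1], every γ-admissible triple satisfies
V/γ² ≤ (1/2)(1 + 1/(2√2γ²)) < 1/2 + 1/(2√2), so the maximal value 1/2 + 1/(2√2)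
is never attained in the low-loss regime. -/
theorem no_optimal_discrimination_low_loss (γ : ℝ) (hγ : 1/Real.sqrt 2 < γ) (hγ' : γ ≤ 1) :
    (∀ P0 P1 Pe : Mat4, Admissible γ P0 P1 Pe →
        Gval P0 P1 / γ^2 ≤ (1/2) * (1 + 1/(γ^2 * (2*Real.sqrt 2)))) ∧
    (1/2) * (1 + 1/(γ^2 * (2*Real.sqrt 2))) < 1/2 + 1/(2*Real.sqrt 2) := by
  have hs0 : (0:ℝ) < Real.sqrt 2 := Real.sqrt_pos.mpr (by norm_num)
  have hss : Real.sqrt 2 * Real.sqrt 2 = 2 := Real.mul_self_sqrt (by norm_num)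
  have hγ0 : 0 < γ := lt_trans (by positivity) hγ
  have hγsq : 1/2 < γ^2 := by
    have h1 : 1 < γ * Real.sqrt 2 := by
      rw [div_lt_iff₀ hs0] at hγ
      linarith
    nlinarith [mul_pos (sub_pos.mpr h1) (show (0:ℝ) < γ * Real.sqrt 2 + 1 by positivity)]
  constructor
  · rintro P0 P1 Pe ⟨h0, h1, he, hsum1, hcon⟩
    -- trace of Pe
    have hte : Pe.trace = 4*(1 - (γ:ℂ)^2) := by
      have e1 : ∑ x : Bool × Bool, ∑ y : Bool × Bool, ((omg x ⊗ₖ tau y) * Pe).trace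
          = ((∑ x : Bool × Bool, ∑ y : Bool × Bool, omg x ⊗ₖ tau y) * Pe).trace := by
        simp only [Finset.sum_mul, Matrix.trace_sum]
      have e2 : ∑ x : Bool × Bool, ∑ y : Bool × Bool, ((omg x ⊗ₖ tau y) * Pe).trace
          = 16 * (1 - (γ:ℂ)^2) := by
        simp only [hcon, Finset.sum_const, Finset.card_univ]
        simp [Fintype.card_prod]
        ring
      rw [e2, hsumK] at e1
      rw [Matrix.smul_mul, Matrix.one_mul, Matrix.trace_smul, smul_eq_mul] at e1
      linear_combination -e1 / 4
    have ht01 : P0.trace + P1.trace = 4*(γ:ℂ)^2 := by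
      have := congrArg Matrix.trace hsum1
      rw [Matrix.trace_add, Matrix.trace_add, Matrix.trace_one] at this
      simp [Fintype.card_prod] at this
      linear_combination this - hte
    -- decompose rho
    have hrf : rho false = (1/4:ℂ) • (1:Mat4)
        + (1/(4*(Real.sqrt 2:ℂ))) • (proj PsiP - proj PsiM) := by
      have h : rho false = (1/2:ℂ) • ((rho false + rho true) + (rho false - rho true)) := by
        module
      rw [h, rho_add, rho_sub]
      module
    have hrt : rho true = (1/4:ℂ) • (1:Mat4)
        - (1/(4*(Real.sqrt 2:ℂ))) • (proj PsiP - proj PsiM) := by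
      have h : rho true = (1/2:ℂ) • ((rho false + rho true) - (rho false - rho true)) := by
        module
      rw [h, rho_add, rho_sub]
      module
    set p0 := star PsiP ⬝ᵥ (P0 *ᵥ PsiP) with hp0
    set p1 := star PsiP ⬝ᵥ (P1 *ᵥ PsiP) with hp1
    set pe := star PsiP ⬝ᵥ (Pe *ᵥ PsiP) with hpe
    set q0 := star PsiM ⬝ᵥ (P0 *ᵥ PsiM) with hq0
    set q1 := star PsiM ⬝ᵥ (P1 *ᵥ PsiM) with hq1
    set qe := star PsiM ⬝ᵥ (Pe *ᵥ PsiM) with hqe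
    have keyT : (rho false * P0 + rho true * P1).trace
        = (γ:ℂ)^2 + (1/(4*(Real.sqrt 2:ℂ))) * (p0 - q0 - p1 + q1) := by
      rw [hrf, hrt]
      simp only [Matrix.add_mul, Matrix.sub_mul, Matrix.smul_mul, Matrix.trace_add,
        Matrix.trace_sub, Matrix.trace_smul, Matrix.one_mul, smul_eq_mul,
        trace_proj_mul, ← hp0, ← hp1, ← hq0, ← hq1]
      linear_combination ht01 / 4
    -- positivity and normalization facts
    have hsumP : p0 + p1 + pe = 1 := by
      have h := congrArg (fun M => star PsiP ⬝ᵥ (M *ᵥ PsiP)) hsum1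
      simpa [Matrix.add_mulVec, dotProduct_add, Matrix.one_mulVec, unitP,
        ← hp0, ← hp1, ← hpe] using h
    have hsumQ : q0 + q1 + qe = 1 := by
      have h := congrArg (fun M => star PsiM ⬝ᵥ (M *ᵥ PsiM)) hsum1
      simpa [Matrix.add_mulVec, dotProduct_add, Matrix.one_mulVec, unitM,
        ← hq0, ← hq1, ← hqe] using h
    have hp0n := Complex.nonneg_iff.mp (h0.dotProduct_mulVec_nonneg PsiP)
    have hp1n := Complex.nonneg_iff.mp (h1.dotProduct_mulVec_nonneg PsiP)
    have hpen := Complex.nonneg_iff.mp (he.dotProduct_mulVec_nonneg PsiP)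
    have hq0n := Complex.nonneg_iff.mp (h0.dotProduct_mulVec_nonneg PsiM)
    have hq1n := Complex.nonneg_iff.mp (h1.dotProduct_mulVec_nonneg PsiM)
    have hqen := Complex.nonneg_iff.mp (he.dotProduct_mulVec_nonneg PsiM)
    have hsumPre : p0.re + p1.re + pe.re = 1 := by
      have := congrArg Complex.re hsumP
      simpa using this
    have hsumQre : q0.re + q1.re + qe.re = 1 := by
      have := congrArg Complex.re hsumQ
      simpa using this
    have hp0le : p0.re ≤ 1 := by linarith [hp1n.1, hpen.1]
    have hq1le : q1.re ≤ 1 := by linarith [hq0n.1, hqen.1]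
    -- real part
    have hc : (1/(4*(Real.sqrt 2:ℂ))) = (((1/(4*Real.sqrt 2)):ℝ):ℂ) := by push_cast; ring
    have hre : ((rho false * P0 + rho true * P1).trace).re
        = γ^2 + (1/(4*Real.sqrt 2)) * (p0.re - q0.re - p1.re + q1.re) := by
      have hg : ((γ:ℂ))^2 = (((γ^2):ℝ):ℂ) := by push_cast; ring
      rw [keyT, hc, hg, Complex.add_re, Complex.ofReal_re, Complex.re_ofReal_mul]
      simp [Complex.sub_re, Complex.add_re]
    have hZ : p0.re - q0.re - p1.re + q1.re ≤ 2 := by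
      linarith [hp1n.1, hq0n.1]
    have hVle : Gval P0 P1 ≤ γ^2/2 + 1/(4*Real.sqrt 2) := by
      rw [Gval, hre]
      have hcn : (0:ℝ) < 1/(4*Real.sqrt 2) := by positivity
      nlinarith
    rw [div_le_iff₀ (by positivity : (0:ℝ) < γ^2)]
    have hRHS : (1/2) * (1 + 1/(γ^2 * (2*Real.sqrt 2))) * γ^2
        = γ^2/2 + 1/(4*Real.sqrt 2) := by
      field_simp
      ring
    rw [hRHS]
    exact hVle
  · have key : 1/(γ^2*(2*Real.sqrt 2)) < 1/Real.sqrt 2 := by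
      rw [div_lt_div_iff₀ (by positivity) hs0]
      nlinarith [mul_lt_mul_of_pos_right (show (1:ℝ) < 2*γ^2 by linarith) hs0]
    have h' : 1/(2*Real.sqrt 2) = (1/Real.sqrt 2)/2 := by ring
    linarith
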